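/- arXiv:1707.07981 — 2 statements merged into one kernel-verified Lean document; each statement's English description precedes it below -/
import Mathlib

section
/- Let Ψ be a closed subroot system of the twisted affine root system Φ such that Gr(Ψ) is irreducible and contains both a short root and a long root of Φ̊. Then for every short root α ∈ Gr(Ψ) and every long root β ∈ Gr(Ψ), {r − r′ : r, r′ ∈ Z_α(Ψ)} ∩ mℤ = {r − r′ : r, r′ ∈ Z_β(Ψ)}. Equivalently, if n_s, n_ℓ ≥ 0 are defined by {r − r′ : r, r′ ∈ Z_α(Ψ)} = n_sℤ and {r − r′ : r, r′ ∈ Z_β(Ψ)} = n_ℓℤ, then n_ℓ = n_s when m divides n_s, and n_ℓ = m·n_s otherwise. -/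
noncomputable section

variable {V : Type*} [NormedAddCommGroup V] [InnerProductSpace ℝ V]

/-- The Cartan pairing `⟨β, α∨⟩ = 2(β,α)/(α,α)`. -/
def cartanPair (α β : V) : ℝ := 2 * (inner ℝ β α : ℝ) / (inner ℝ α α : ℝ)

/-- The reflection `s_α` on `V`: `s_α(β) = β - ⟨β,α∨⟩ α`. -/
def reflV (α β : V) : V := β - cartanPair α β • α

/-- The affine reflection `s_x` on `V × ℝ` with respect to the bilinear form
`B((x,a),(y,b)) = (x,y)`. -/
def reflA (x y : V × ℝ) : V × ℝ :=
  y - (2 * (inner ℝ y.1 x.1 : ℝ) / (inner ℝ x.1 x.1 : ℝ)) • x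

/-- A finite irreducible reduced crystallographic root system in `V`. -/
structure IsIrreducibleRootSystem (R : Set V) : Prop where
  finite : R.Finite
  spans : Submodule.span ℝ R = ⊤
  zero_notMem : (0 : V) ∉ R
  reduced : ∀ α ∈ R, ∀ c : ℝ, c • α ∈ R → c = 1 ∨ c = -1
  cartan_int : ∀ α ∈ R, ∀ β ∈ R, ∃ n : ℤ, cartanPair α β = (n : ℝ)
  refl_mem : ∀ α ∈ R, ∀ β ∈ R, reflV α β ∈ R
  irred : ∀ A B : Set V, R = A ∪ B → A.Nonempty → B.Nonempty →
    ∃ a ∈ A, ∃ b ∈ B, (inner ℝ a b : ℝ) ≠ 0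

/-- A subroot system of a set `Φ` of affine roots: a nonempty proper subset stable
under the reflections `s_x`, `x ∈ Ψ`. -/
def IsSubrootSystem (Φ Ψ : Set (V × ℝ)) : Prop :=
  Ψ.Nonempty ∧ Ψ ⊆ Φ ∧ Ψ ≠ Φ ∧ ∀ x ∈ Ψ, ∀ y ∈ Ψ, reflA x y ∈ Ψ

/-- `Ψ` is closed in `Φ`. -/
def IsClosedIn (Φ Ψ : Set (V × ℝ)) : Prop := ∀ x ∈ Ψ, ∀ y ∈ Ψ, x + y ∈ Φ → x + y ∈ Ψ

def IsClosedSubrootSystem (Φ Ψ : Set (V × ℝ)) : Prop :=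
  IsSubrootSystem Φ Ψ ∧ IsClosedIn Φ Ψ

/-- A maximal closed subroot system of `Φ`: any closed subroot system of `Φ`
containing it equals it. -/
def IsMaximalClosedSubrootSystem (Φ Ψ : Set (V × ℝ)) : Prop :=
  IsClosedSubrootSystem Φ Ψ ∧ ∀ Δ, IsClosedSubrootSystem Φ Δ → Ψ ⊆ Δ → Δ = Ψ

/-- A subroot system of a finite root system `R`. -/
def IsSubrootSystemF (R S : Set V) : Prop :=
  S.Nonempty ∧ S ⊆ R ∧ S ≠ R ∧ ∀ α ∈ S, ∀ β ∈ S, reflV α β ∈ S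

/-- `S` is closed in the finite root system `R`. -/
def IsClosedInF (R S : Set V) : Prop := ∀ α ∈ S, ∀ β ∈ S, α + β ∈ R → α + β ∈ S

def IsMaximalClosedSubrootSystemF (R S : Set V) : Prop :=
  (IsSubrootSystemF R S ∧ IsClosedInF R S) ∧
    ∀ T, IsSubrootSystemF R T → IsClosedInF R T → S ⊆ T → T = S

/-- A `ℤ`-linear function on `S`: the restriction to `S` of an additive group
homomorphism from the subgroup of `V` generated by `S` to `ℤ`. -/
def IsZLinearOn (S : Set V) (p : V → ℤ) : Prop :=
  ∃ f : AddSubgroup.closure S →+ ℤ,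
    ∀ α, ∀ h : α ∈ S, p α = f ⟨α, AddSubgroup.subset_closure h⟩

/-- An irreducible subset: nonempty and not a union of two nonempty mutually
orthogonal subsets. -/
def IsIrreducibleSubset (S : Set V) : Prop :=
  S.Nonempty ∧ ∀ A B : Set V, S = A ∪ B → A.Nonempty → B.Nonempty →
    ∃ a ∈ A, ∃ b ∈ B, (inner ℝ a b : ℝ) ≠ 0

/-- A short root: squared length `a`. -/
def ShortR (R : Set V) (a : ℝ) (α : V) : Prop := α ∈ R ∧ (inner ℝ α α : ℝ) = a

/-- A long root: squared length `b`. -/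
def LongR (R : Set V) (b : ℝ) (α : V) : Prop := α ∈ R ∧ (inner ℝ α α : ℝ) = b

/-- The data of a non simply laced irreducible root system `R` with short squared
length `a`, long squared length `b = m·a`, `m ∈ {2,3}`. -/
structure IsTwistedData (R : Set V) (a b : ℝ) (m : ℕ) : Prop where
  root : IsIrreducibleRootSystem R
  len : ∀ α ∈ R, (inner ℝ α α : ℝ) = a ∨ (inner ℝ α α : ℝ) = b
  a_pos : 0 < a
  a_lt_b : a < b
  ex_short : ∃ α ∈ R, (inner ℝ α α : ℝ) = a
  ex_long : ∃ α ∈ R, (inner ℝ α α : ℝ) = b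
  ratio : b = (m : ℝ) * a
  m23 : m = 2 ∨ m = 3

/-- The twisted affine root system attached to `(R, a, b, m)`. -/
def twistedRS (R : Set V) (a b : ℝ) (m : ℕ) : Set (V × ℝ) :=
  {x | (ShortR R a x.1 ∧ ∃ r : ℤ, x.2 = (r : ℝ)) ∨
       (LongR R b x.1 ∧ ∃ r : ℤ, x.2 = (m : ℝ) * (r : ℝ))}

/-- The gradient of a set of affine roots (twisted case). -/
def GrT (Ψ : Set (V × ℝ)) : Set V := {α | ∃ c : ℝ, (α, c) ∈ Ψ}

/-- `Z_α(Ψ) = {c ∈ ℤ : α + cδ ∈ Ψ}`. -/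
def ZSetT (Ψ : Set (V × ℝ)) (α : V) : Set ℤ := {c | (α, (c : ℝ)) ∈ Ψ}

/-- The difference set `{r - r' : r, r' ∈ Z_α(Ψ)}`. -/
def DiffSetT (Ψ : Set (V × ℝ)) (α : V) : Set ℤ :=
  {d | ∃ r ∈ ZSetT Ψ α, ∃ r' ∈ ZSetT Ψ α, d = r - r'}

/-- A semi-closed subset of `R`: not closed, and any failure of closedness comes
from two short roots summing to a long root. -/
def IsSemiClosed (R : Set V) (a b : ℝ) (S : Set V) : Prop :=
  ¬ IsClosedInF R S ∧
    ∀ α ∈ S, ∀ β ∈ S, α + β ∈ R \ S →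
      ShortR R a α ∧ ShortR R a β ∧ LongR R b (α + β)

/-- The lift of a subset `S ⊆ R` in the twisted affine root system. -/
def liftT (R : Set V) (a b : ℝ) (m : ℕ) (S : Set V) : Set (V × ℝ) :=
  {x | (ShortR R a x.1 ∧ x.1 ∈ S ∧ ∃ r : ℤ, x.2 = (r : ℝ)) ∨
       (LongR R b x.1 ∧ x.1 ∈ S ∧ ∃ r : ℤ, x.2 = (m : ℝ) * (r : ℝ))}


section Statement9Aux

variable {R : Set V} {a b : ℝ} {m : ℕ} {Ψ : Set (V × ℝ)}

lemma cartanPair_self' {γ : V} (h : (inner ℝ γ γ : ℝ) ≠ 0) : cartanPair γ γ = 2 := by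
  unfold cartanPair; field_simp

lemma reflA_pair (γ γ' : V) (c c' : ℝ) :
    reflA (γ, c) (γ', c') = (γ' - cartanPair γ γ' • γ, c' - cartanPair γ γ' * c) := rfl

lemma memR_of_memΨ (hΨ : IsClosedSubrootSystem (twistedRS R a b m) Ψ)
    {x : V × ℝ} (hx : x ∈ Ψ) : x.1 ∈ R := by
  rcases hΨ.1.2.1 hx with ⟨h, _⟩ | ⟨h, _⟩ <;> exact h.1

lemma GrT_subset_R (hΨ : IsClosedSubrootSystem (twistedRS R a b m) Ψ)
    {γ : V} (h : γ ∈ GrT Ψ) : γ ∈ R := by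
  obtain ⟨c, hc⟩ := h; exact memR_of_memΨ hΨ hc

lemma reflΨ (hΨ : IsClosedSubrootSystem (twistedRS R a b m) Ψ)
    {γ γ' : V} {c c' : ℝ} (h : (γ, c) ∈ Ψ) (h' : (γ', c') ∈ Ψ) :
    (γ' - cartanPair γ γ' • γ, c' - cartanPair γ γ' * c) ∈ Ψ := by
  rw [← reflA_pair]; exact hΨ.1.2.2.2 _ h _ h'

lemma innerself_ne (hT : IsTwistedData R a b m) {γ : V} (hγ : γ ∈ R) :
    (inner ℝ γ γ : ℝ) ≠ 0 := by
  intro e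
  exact hT.root.zero_notMem ((inner_self_eq_zero.mp e) ▸ hγ)

lemma neg_memΨ (hT : IsTwistedData R a b m)
    (hΨ : IsClosedSubrootSystem (twistedRS R a b m) Ψ)
    {γ : V} {c : ℝ} (h : (γ, c) ∈ Ψ) : (-γ, -c) ∈ Ψ := by
  have h2 := reflΨ hΨ h h
  rw [cartanPair_self' (innerself_ne hT (memR_of_memΨ hΨ h))] at h2
  have e1 : γ - (2:ℝ) • γ = -γ := by module
  have e2 : c - 2 * c = -c := by ring
  rwa [e1, e2] at h2

lemma neg_mem_GrT (hT : IsTwistedData R a b m)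
    (hΨ : IsClosedSubrootSystem (twistedRS R a b m) Ψ)
    {γ : V} (h : γ ∈ GrT Ψ) : -γ ∈ GrT Ψ := by
  obtain ⟨c, hc⟩ := h; exact ⟨-c, neg_memΨ hT hΨ hc⟩

lemma Zneg (hT : IsTwistedData R a b m)
    (hΨ : IsClosedSubrootSystem (twistedRS R a b m) Ψ)
    {γ : V} {c : ℤ} (h : c ∈ ZSetT Ψ γ) : -c ∈ ZSetT Ψ (-γ) := by
  have h2 := neg_memΨ hT hΨ h
  show (-γ, ((-c : ℤ) : ℝ)) ∈ Ψ
  push_cast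
  exact h2

lemma Dneg (hT : IsTwistedData R a b m)
    (hΨ : IsClosedSubrootSystem (twistedRS R a b m) Ψ)
    (γ : V) : DiffSetT Ψ (-γ) = DiffSetT Ψ γ := by
  have key : ∀ δ : V, ∀ d ∈ DiffSetT Ψ δ, d ∈ DiffSetT Ψ (-δ) := by
    rintro δ d ⟨r, hr, r', hr', rfl⟩
    exact ⟨-r', Zneg hT hΨ hr', -r, Zneg hT hΨ hr, by ring⟩
  ext d
  constructor
  · intro h; have h2 := key _ d h; rwa [neg_neg] at h2
  · exact key γ d

lemma ZSetT_nonempty (hΨ : IsClosedSubrootSystem (twistedRS R a b m) Ψ)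
    {γ : V} (h : γ ∈ GrT Ψ) : ∃ n : ℤ, n ∈ ZSetT Ψ γ := by
  obtain ⟨c, hc⟩ := h
  rcases hΨ.1.2.1 hc with ⟨_, r, hr⟩ | ⟨_, r, hr⟩
  · exact ⟨r, show (γ, ((r:ℤ):ℝ)) ∈ Ψ by rw [← hr]; exact hc⟩
  · refine ⟨m * r, ?_⟩
    show (γ, ((m * r : ℤ):ℝ)) ∈ Ψ
    push_cast
    rw [← hr]; exact hc

lemma Z_long_dvd (hT : IsTwistedData R a b m)
    (hΨ : IsClosedSubrootSystem (twistedRS R a b m) Ψ)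
    {β : V} (hβ : LongR R b β) {c : ℤ} (hc : c ∈ ZSetT Ψ β) : (m : ℤ) ∣ c := by
  rcases hΨ.1.2.1 hc with ⟨hS, _⟩ | ⟨_, r, hr⟩
  · exact absurd (hS.2.symm.trans hβ.2) (ne_of_lt hT.a_lt_b)
  · refine ⟨r, ?_⟩
    have : (c : ℝ) = ((m * r : ℤ) : ℝ) := by push_cast; exact hr
    exact_mod_cast this

lemma cartanPair_reflect {γ γ' : V} (hγ0 : (inner ℝ γ γ : ℝ) ≠ 0) (k : ℝ)
    (hk : cartanPair γ γ' = k) : cartanPair γ (γ' - k • γ) = -k := by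
  have h2 : cartanPair γ (γ' - k • γ) = cartanPair γ γ' - k * cartanPair γ γ := by
    unfold cartanPair
    rw [inner_sub_left, real_inner_smul_left]
    field_simp
  rw [h2, hk, cartanPair_self' hγ0]
  ring

lemma Z_transfer (hT : IsTwistedData R a b m)
    (hΨ : IsClosedSubrootSystem (twistedRS R a b m) Ψ)
    {γ γ' : V} {k : ℤ} (hk : cartanPair γ γ' = (k : ℝ))
    {c c2 c' : ℤ} (hc : c ∈ ZSetT Ψ γ) (hc2 : c2 ∈ ZSetT Ψ γ) (hc' : c' ∈ ZSetT Ψ γ') :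
    c' - k * (c - c2) ∈ ZSetT Ψ γ' := by
  have hg0 : (inner ℝ γ γ : ℝ) ≠ 0 := innerself_ne hT (memR_of_memΨ hΨ hc)
  have h1 := reflΨ hΨ hc hc'
  rw [hk] at h1
  have h2 := reflΨ hΨ hc2 h1
  rw [cartanPair_reflect hg0 _ hk] at h2
  have e1 : γ' - ((k:ℤ):ℝ) • γ - (-((k:ℤ):ℝ)) • γ = γ' := by module
  have e2 : (((c':ℤ):ℝ) - ((k:ℤ):ℝ) * ((c:ℤ):ℝ)) - (-((k:ℤ):ℝ)) * ((c2:ℤ):ℝ)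
      = ((c' - k * (c - c2) : ℤ) : ℝ) := by push_cast; ring
  rw [e1, e2] at h2
  exact h2

lemma D_symm {γ : V} {d : ℤ} (hd : d ∈ DiffSetT Ψ γ) : -d ∈ DiffSetT Ψ γ := by
  obtain ⟨r, hr, r', hr', rfl⟩ := hd
  exact ⟨r', hr', r, hr, by ring⟩

lemma D_transfer (hT : IsTwistedData R a b m)
    (hΨ : IsClosedSubrootSystem (twistedRS R a b m) Ψ)
    {γ γ' : V} (hγ' : γ' ∈ GrT Ψ) {k : ℤ}
    (hk : cartanPair γ γ' = (k:ℝ)) {d : ℤ} (hd : d ∈ DiffSetT Ψ γ) :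
    k * d ∈ DiffSetT Ψ γ' := by
  obtain ⟨c', hc'⟩ := ZSetT_nonempty hΨ hγ'
  obtain ⟨r, hr, r', hr', rfl⟩ := hd
  exact ⟨c', hc', _, Z_transfer hT hΨ hk hr hr' hc', by ring⟩

lemma D_subset_pm1 (hT : IsTwistedData R a b m)
    (hΨ : IsClosedSubrootSystem (twistedRS R a b m) Ψ)
    {γ γ' : V} (hγ' : γ' ∈ GrT Ψ) {ε : ℤ}
    (hk : cartanPair γ γ' = (ε:ℝ)) (hε : ε = 1 ∨ ε = -1) :
    DiffSetT Ψ γ ⊆ DiffSetT Ψ γ' := by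
  intro d hd
  have h := D_transfer hT hΨ hγ' hk hd
  rcases hε with rfl | rfl
  · simpa using h
  · have h2 := D_symm h
    simpa using h2

lemma parallel_of_eq {γ γ' : V} (hγ0 : (inner ℝ γ γ : ℝ) ≠ 0)
    (h : (inner ℝ γ γ' : ℝ) * inner ℝ γ γ' = (inner ℝ γ γ : ℝ) * inner ℝ γ' γ') :
    γ' = ((inner ℝ γ γ' : ℝ) / inner ℝ γ γ) • γ := by
  set t : ℝ := (inner ℝ γ γ' : ℝ) / inner ℝ γ γ with ht
  have hw : (inner ℝ (γ' - t • γ) (γ' - t • γ) : ℝ) = 0 := by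
    have expand : (inner ℝ (γ' - t • γ) (γ' - t • γ) : ℝ)
        = inner ℝ γ' γ' - 2 * t * inner ℝ γ γ' + t^2 * inner ℝ γ γ := by
      simp only [inner_sub_left, inner_sub_right, real_inner_smul_left, real_inner_smul_right,
        real_inner_comm γ' γ]
      ring
    rw [expand, ht]
    field_simp
    linear_combination (-1 : ℝ) * h
  have h0 := inner_self_eq_zero.mp hw
  rw [sub_eq_zero] at h0
  exact h0

lemma pairing_same (hT : IsTwistedData R a b m) {γ γ' : V} (hγ : γ ∈ R) (hγ' : γ' ∈ R)
    (hlen : (inner ℝ γ γ : ℝ) = inner ℝ γ' γ') (hne : (inner ℝ γ γ' : ℝ) ≠ 0)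
    (h1 : γ' ≠ γ) (h2 : γ' ≠ -γ) :
    ∃ ε : ℤ, cartanPair γ γ' = (ε:ℝ) ∧ (ε = 1 ∨ ε = -1) := by
  obtain ⟨n, hn⟩ := hT.root.cartan_int γ hγ γ' hγ'
  refine ⟨n, hn, ?_⟩
  have hgne : (inner ℝ γ γ : ℝ) ≠ 0 := innerself_ne hT hγ
  have hγ0 : γ ≠ 0 := fun e => hT.root.zero_notMem (e ▸ hγ)
  have hg : (0:ℝ) < inner ℝ γ γ := lt_of_le_of_ne real_inner_self_nonneg (Ne.symm hgne)
  have hCS := real_inner_mul_inner_self_le γ γ'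
  have hstrict : (inner ℝ γ γ' : ℝ) * inner ℝ γ γ' < (inner ℝ γ γ : ℝ) * inner ℝ γ' γ' := by
    rcases lt_or_eq_of_le hCS with h | h
    · exact h
    · exfalso
      have hp := parallel_of_eq hgne h
      rcases hT.root.reduced γ hγ _ (hp ▸ hγ') with ht | ht
      · exact h1 (by rw [hp, ht, one_smul])
      · exact h2 (by rw [hp, ht, neg_smul, one_smul])
  have hnum : 2 * (inner ℝ γ' γ : ℝ) = n * inner ℝ γ γ := by
    unfold cartanPair at hn
    field_simp at hn
    linarith
  have hpp : (inner ℝ γ' γ : ℝ) = inner ℝ γ γ' := real_inner_comm γ γ'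
  have key : (n:ℝ)^2 * ((inner ℝ γ γ : ℝ) * inner ℝ γ γ) < 4 * ((inner ℝ γ γ : ℝ) * inner ℝ γ γ) := by
    calc (n:ℝ)^2 * ((inner ℝ γ γ : ℝ) * inner ℝ γ γ) = ((n:ℝ) * inner ℝ γ γ)^2 := by ring
      _ = (2 * (inner ℝ γ' γ : ℝ))^2 := by rw [hnum]
      _ = 4 * ((inner ℝ γ γ' : ℝ) * inner ℝ γ γ') := by rw [hpp]; ring
      _ < 4 * ((inner ℝ γ γ : ℝ) * inner ℝ γ' γ') := by linarith
      _ = 4 * ((inner ℝ γ γ : ℝ) * inner ℝ γ γ) := by rw [← hlen]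
  have hsq : (n:ℝ)^2 < 4 := lt_of_mul_lt_mul_right (by linarith [key]) (le_of_lt (mul_pos hg hg))
  have h4 : n^2 < 4 := by exact_mod_cast hsq
  have hn0 : n ≠ 0 := by
    rintro rfl
    simp only [Int.cast_zero, zero_mul] at hnum
    rw [hpp] at hnum
    exact hne (by linarith)
  have hle : n ≤ 1 := by nlinarith
  have hge : -1 ≤ n := by nlinarith
  omega

lemma pairing_mixed (hT : IsTwistedData R a b m) {α β : V}
    (hα : ShortR R a α) (hβ : LongR R b β) (hne : (inner ℝ α β : ℝ) ≠ 0) :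
    ∃ ε : ℤ, cartanPair β α = (ε:ℝ) ∧ (ε = 1 ∨ ε = -1) := by
  obtain ⟨k, hk⟩ := hT.root.cartan_int β hβ.1 α hα.1
  refine ⟨k, hk, ?_⟩
  have ha := hT.a_pos
  have hb : (0:ℝ) < b := lt_trans ha hT.a_lt_b
  have hm2 : (2:ℝ) ≤ (m:ℝ) := by rcases hT.m23 with h|h <;> rw [h] <;> norm_num
  have hnum : 2 * (inner ℝ α β : ℝ) = k * b := by
    unfold cartanPair at hk
    rw [hβ.2] at hk
    field_simp at hk
    linarith
  have hCS := real_inner_mul_inner_self_le β α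
  rw [hβ.2, hα.2, ← real_inner_comm β α] at hCS
  have h1 : ((k:ℝ) * b)^2 ≤ 4 * (b * a) := by
    calc ((k:ℝ)*b)^2 = (2 * (inner ℝ α β : ℝ))^2 := by rw [hnum]
      _ = 4 * ((inner ℝ α β : ℝ) * inner ℝ α β) := by ring
      _ ≤ 4 * (b * a) := by linarith
  have h1' : (k:ℝ)^2 * b ≤ 4 * a := by
    apply le_of_mul_le_mul_right _ hb
    calc (k:ℝ)^2 * b * b = ((k:ℝ)*b)^2 := by ring
      _ ≤ 4 * (b * a) := h1
      _ = 4 * a * b := by ring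
  have h2 : (k:ℝ)^2 * (m:ℝ) ≤ 4 := by
    apply le_of_mul_le_mul_right _ ha
    calc (k:ℝ)^2 * (m:ℝ) * a = (k:ℝ)^2 * b := by rw [hT.ratio]; ring
      _ ≤ 4 * a := h1'
  have h3 : (k:ℝ)^2 ≤ 2 := by nlinarith [sq_nonneg (k:ℝ)]
  have hk2 : k^2 ≤ 2 := by exact_mod_cast h3
  have hk0 : k ≠ 0 := by
    rintro rfl
    simp only [Int.cast_zero, zero_mul] at hnum
    exact hne (by linarith)
  have hle : k ≤ 1 := by nlinarith
  have hge : -1 ≤ k := by nlinarith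
  omega

lemma D_long_dvd (hT : IsTwistedData R a b m)
    (hΨ : IsClosedSubrootSystem (twistedRS R a b m) Ψ)
    {β : V} (hβ : LongR R b β) {d : ℤ} (hd : d ∈ DiffSetT Ψ β) : (m:ℤ) ∣ d := by
  obtain ⟨r, hr, r', hr', rfl⟩ := hd
  exact dvd_sub (Z_long_dvd hT hΨ hβ hr) (Z_long_dvd hT hΨ hβ hr')

lemma mixed_key (hT : IsTwistedData R a b m)
    (hΨ : IsClosedSubrootSystem (twistedRS R a b m) Ψ)
    {α β : V} (hαG : α ∈ GrT Ψ) (hβG : β ∈ GrT Ψ)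
    (hα : ShortR R a α) (hβ : LongR R b β) (hne : (inner ℝ α β : ℝ) ≠ 0) :
    DiffSetT Ψ α ∩ {d : ℤ | (m:ℤ) ∣ d} = DiffSetT Ψ β := by
  obtain ⟨β₁, hβ₁G, hβ₁L, hcp, hDeq⟩ :
      ∃ β₁, β₁ ∈ GrT Ψ ∧ LongR R b β₁ ∧ cartanPair β₁ α = ((-1 : ℤ) : ℝ) ∧
        DiffSetT Ψ β₁ = DiffSetT Ψ β := by
    obtain ⟨ε, hε, hε1⟩ := pairing_mixed hT hα hβ hne
    rcases hε1 with rfl | rfl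
    · have hnegR : -β ∈ R := by
        have hm := hT.root.refl_mem β hβ.1 β hβ.1
        rw [reflV, cartanPair_self' (innerself_ne hT hβ.1)] at hm
        rwa [show β - (2:ℝ) • β = -β by module] at hm
      refine ⟨-β, neg_mem_GrT hT hΨ hβG, ⟨hnegR, by rw [inner_neg_neg]; exact hβ.2⟩, ?_,
        Dneg hT hΨ β⟩
      have hflip : cartanPair (-β) α = - cartanPair β α := by
        unfold cartanPair
        rw [inner_neg_right, inner_neg_neg]
        ring
      rw [hflip, hε]
      push_cast
      ring
    · exact ⟨β, hβG, hβ, hε, rfl⟩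
  rw [← hDeq]
  apply Set.Subset.antisymm
  · rintro d ⟨hdD, hdM⟩
    obtain ⟨r, hr, r', hr', rfl⟩ := hdD
    obtain ⟨c, hc⟩ := ZSetT_nonempty hΨ hβ₁G
    have h1 := reflΨ hΨ hc hr
    rw [hcp] at h1
    have e1 : α - (((-1:ℤ)):ℝ) • β₁ = α + β₁ := by push_cast; module
    have e2 : ((r:ℤ):ℝ) - (((-1:ℤ)):ℝ) * ((c:ℤ):ℝ) = ((r + c : ℤ):ℝ) := by push_cast; ring
    rw [e1, e2] at h1
    have h2 := neg_memΨ hT hΨ hr'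
    have hsum : ((α + β₁, ((r + c : ℤ):ℝ)) : V × ℝ) + (-α, -((r':ℤ):ℝ))
        = (β₁, ((r + c - r' : ℤ):ℝ)) := by
      rw [Prod.mk_add_mk]
      congr 1
      · abel
      · push_cast; ring
    have hΦ : ((β₁, ((r + c - r' : ℤ):ℝ)) : V × ℝ) ∈ twistedRS R a b m := by
      right
      refine ⟨hβ₁L, ?_⟩
      obtain ⟨c₀, hc₀⟩ := Z_long_dvd hT hΨ hβ₁L hc
      obtain ⟨e, he⟩ := hdM
      refine ⟨c₀ + e, ?_⟩
      have hint : r + c - r' = (m:ℤ) * (c₀ + e) := by linear_combination hc₀ + he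
      rw [hint]
      push_cast
      ring
    have h4 := hΨ.2 _ h1 _ h2 (by rw [hsum]; exact hΦ)
    rw [hsum] at h4
    exact ⟨r + c - r', h4, c, hc, by ring⟩
  · intro d hd
    refine ⟨D_subset_pm1 hT hΨ hαG hcp (Or.inr rfl) hd, D_long_dvd hT hΨ hβ₁L hd⟩

lemma Estep (hT : IsTwistedData R a b m)
    (hΨ : IsClosedSubrootSystem (twistedRS R a b m) Ψ)
    {γ γ' : V} (hγ : γ ∈ GrT Ψ) (hγ' : γ' ∈ GrT Ψ)
    (hne : (inner ℝ γ γ' : ℝ) ≠ 0) :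
    DiffSetT Ψ γ ∩ {d : ℤ | (m:ℤ) ∣ d} = DiffSetT Ψ γ' ∩ {d : ℤ | (m:ℤ) ∣ d} := by
  by_cases h1 : γ' = γ
  · rw [h1]
  by_cases h2 : γ' = -γ
  · rw [h2, Dneg hT hΨ]
  have hγR := GrT_subset_R hΨ hγ
  have hγ'R := GrT_subset_R hΨ hγ'
  have hsame : (inner ℝ γ γ : ℝ) = inner ℝ γ' γ' →
      DiffSetT Ψ γ ∩ {d : ℤ | (m:ℤ) ∣ d} = DiffSetT Ψ γ' ∩ {d : ℤ | (m:ℤ) ∣ d} := by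
    intro hlen
    obtain ⟨ε, hε, hε1⟩ := pairing_same hT hγR hγ'R hlen hne h1 h2
    have hne' : (inner ℝ γ' γ : ℝ) ≠ 0 := by rw [real_inner_comm]; exact hne
    have h1' : γ ≠ γ' := fun e => h1 e.symm
    have h2' : γ ≠ -γ' := by
      intro e; apply h2; rw [e, neg_neg]
    obtain ⟨ε', hε', hε1'⟩ := pairing_same hT hγ'R hγR hlen.symm hne' h1' h2'
    have hDD : DiffSetT Ψ γ = DiffSetT Ψ γ' :=
      Set.Subset.antisymm (D_subset_pm1 hT hΨ hγ' hε hε1) (D_subset_pm1 hT hΨ hγ hε' hε1')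
    rw [hDD]
  rcases hT.len γ hγR with hga | hgb <;> rcases hT.len γ' hγ'R with hg'a | hg'b
  · exact hsame (hga.trans hg'a.symm)
  · have hmk := mixed_key hT hΨ hγ hγ' ⟨hγR, hga⟩ ⟨hγ'R, hg'b⟩ hne
    rw [hmk]
    exact Set.Subset.antisymm (fun d hd => ⟨hd, D_long_dvd hT hΨ ⟨hγ'R, hg'b⟩ hd⟩)
      (fun d hd => hd.1)
  · have hne' : (inner ℝ γ' γ : ℝ) ≠ 0 := by rw [real_inner_comm]; exact hne
    have hmk := mixed_key hT hΨ hγ' hγ ⟨hγ'R, hg'a⟩ ⟨hγR, hgb⟩ hne'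
    rw [← hmk, Set.inter_assoc, Set.inter_self]
  · exact hsame (hgb.trans hg'b.symm)

lemma Echain (hT : IsTwistedData R a b m)
    (hΨ : IsClosedSubrootSystem (twistedRS R a b m) Ψ)
    (hirr : IsIrreducibleSubset (GrT Ψ)) {γ γ' : V}
    (hγ : γ ∈ GrT Ψ) (hγ' : γ' ∈ GrT Ψ) :
    DiffSetT Ψ γ ∩ {d : ℤ | (m:ℤ) ∣ d} = DiffSetT Ψ γ' ∩ {d : ℤ | (m:ℤ) ∣ d} := by
  set r : V → V → Prop := fun x y => x ∈ GrT Ψ ∧ y ∈ GrT Ψ ∧ (inner ℝ x y : ℝ) ≠ 0 with hr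
  have hconn : Relation.ReflTransGen r γ γ' := by
    by_contra hcon
    set A : Set V := {y | y ∈ GrT Ψ ∧ Relation.ReflTransGen r γ y} with hA
    set B : Set V := GrT Ψ \ A with hB
    have hsplit : GrT Ψ = A ∪ B := by
      ext x
      simp only [hA, hB, Set.mem_union, Set.mem_setOf_eq, Set.mem_diff]
      tauto
    have hAne : A.Nonempty := ⟨γ, hγ, Relation.ReflTransGen.refl⟩
    have hBne : B.Nonempty := ⟨γ', hγ', fun h => hcon h.2⟩
    obtain ⟨x, hxA, y, hyB, hxy⟩ := hirr.2 A B hsplit hAne hBne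
    exact hyB.2 ⟨hyB.1, hxA.2.tail ⟨hxA.1, hyB.1, hxy⟩⟩
  clear hγ'
  induction hconn with
  | refl => rfl
  | tail hcs hstep ih => exact ih.trans (Estep hT hΨ hstep.1 hstep.2.1 hstep.2.2)

end Statement9Aux

/-- For a closed subroot system `Ψ` of a twisted affine root system
whose gradient is irreducible and contains both a short and a long root, for every
short `α` and long `β` in `Gr(Ψ)`,
`{r − r' : r, r' ∈ Z_α(Ψ)} ∩ mℤ = {r − r' : r, r' ∈ Z_β(Ψ)}`. -/
theorem statement9
    {V : Type*} [NormedAddCommGroup V] [InnerProductSpace ℝ V] [FiniteDimensional ℝ V]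
    (R : Set V) (a b : ℝ) (m : ℕ) (hT : IsTwistedData R a b m)
    (Ψ : Set (V × ℝ)) (hΨ : IsClosedSubrootSystem (twistedRS R a b m) Ψ)
    (hirr : IsIrreducibleSubset (GrT Ψ))
    (hs : ∃ α ∈ GrT Ψ, ShortR R a α) (hl : ∃ β ∈ GrT Ψ, LongR R b β) :
    ∀ α ∈ GrT Ψ, ShortR R a α → ∀ β ∈ GrT Ψ, LongR R b β →
      DiffSetT Ψ α ∩ {d : ℤ | (m : ℤ) ∣ d} = DiffSetT Ψ β := by
  intro α hα hαs β hβ hβl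
  have h1 := Echain hT hΨ hirr hα hβ
  have h2 : DiffSetT Ψ β ∩ {d : ℤ | (m:ℤ) ∣ d} = DiffSetT Ψ β :=
    Set.Subset.antisymm (fun d hd => hd.1) (fun d hd => ⟨hd, D_long_dvd hT hΨ hβl hd⟩)
  rw [h1, h2]
end
end

section
/- For every proper subset I ⊊ {1, …, n} (the empty set allowed), Ψ_I is a maximal closed subroot system of Φ, the affine root system of type D_{n+1}^{(2)}. -/
noncomputable section

variable {V : Type*} [NormedAddCommGroup V] [InnerProductSpace ℝ V]

/-- Euclidean space `ℝ^n`. -/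
abbrev Euc (n : ℕ) := EuclideanSpace ℝ (Fin n)

/-- The standard basis vector `ε_i`. -/
def eps {n : ℕ} (i : Fin n) : Euc n := EuclideanSpace.single i 1

/-- `σ` is a sign. -/
def PM (σ : ℝ) : Prop := σ = 1 ∨ σ = -1

/-- The gradient of a set of affine roots (concrete case): vectors appearing as
the `ℝ^n`-component. -/
def GrC {n : ℕ} (Ψ : Set (Euc n × ℝ)) : Set (Euc n) := {v | ∃ c : ℝ, (v, c) ∈ Ψ}

/-- The affine root system of type `D_{n+1}^{(2)}`. -/
def PhiD2 (n : ℕ) : Set (Euc n × ℝ) :=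
  {x | (∃ i : Fin n, ∃ σ : ℝ, PM σ ∧ ∃ r : ℤ, x = (σ • eps i, (r : ℝ))) ∨
       (∃ i j : Fin n, i ≠ j ∧ ∃ σ τ : ℝ, PM σ ∧ PM τ ∧ ∃ r : ℤ,
          x = (σ • eps i + τ • eps j, ((2 * r : ℤ) : ℝ)))}

/-- The subset `Ψ_I` of `D_{n+1}^{(2)}` attached to `I ⊆ {1,…,n}`. -/
def PsiID2 (n : ℕ) (I : Set (Fin n)) : Set (Euc n × ℝ) :=
  {x | (∃ s ∈ I, ∃ σ : ℝ, PM σ ∧ ∃ r : ℤ, x = (σ • eps s, ((2 * r : ℤ) : ℝ))) ∨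
       (∃ s : Fin n, s ∉ I ∧ ∃ σ : ℝ, PM σ ∧ ∃ r : ℤ,
          x = (σ • eps s, ((2 * r + 1 : ℤ) : ℝ))) ∨
       (∃ s t : Fin n, s ≠ t ∧ ((s ∈ I ∧ t ∈ I) ∨ (s ∉ I ∧ t ∉ I)) ∧
          ∃ σ τ : ℝ, PM σ ∧ PM τ ∧ ∃ r : ℤ,
            x = (σ • eps s + τ • eps t, ((2 * r : ℤ) : ℝ)))}


/-! ### Auxiliary lemmas for Statement 12 -/

section Stmt12Aux

variable {n : ℕ}

lemma PM.one' : PM 1 := Or.inl rfl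

lemma PM.sq {σ : ℝ} (h : PM σ) : σ * σ = 1 := by rcases h with h | h <;> simp [h]

lemma PM.neg' {σ : ℝ} (h : PM σ) : PM (-σ) := by rcases h with h | h <;> simp [PM, h]

lemma PM.int {σ : ℝ} (h : PM σ) : ∃ e : ℤ, (e : ℝ) = σ := by
  rcases h with h | h
  · exact ⟨1, by simp [h]⟩
  · exact ⟨-1, by simp [h]⟩

lemma PM.eq_or_eq_neg {ρ σ : ℝ} (h : PM ρ) (h' : PM σ) : ρ = σ ∨ ρ = -σ := by
  rcases h with h | h <;> rcases h' with h' | h' <;> simp [h, h']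

lemma eps_apply (i m : Fin n) : eps i m = if m = i then 1 else 0 := by
  simp [eps, EuclideanSpace.single_apply]

lemma inner_eps (i j : Fin n) : (inner ℝ (eps i) (eps j) : ℝ) = if j = i then 1 else 0 := by
  simp [eps, EuclideanSpace.inner_single_left, EuclideanSpace.single_apply]
  by_cases h : i = j
  · simp [h]
  · simp [h, Ne.symm h]

lemma inner_se (σ τ : ℝ) (i j : Fin n) :
    (inner ℝ (σ • eps i) (τ • eps j) : ℝ) = if j = i then σ * τ else 0 := by
  rw [real_inner_smul_left, real_inner_smul_right, inner_eps]
  split_ifs <;> ring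

/-- The reflection coefficient. -/
def rk {V : Type*} [NormedAddCommGroup V] [InnerProductSpace ℝ V] (x y : V × ℝ) : ℝ :=
  2 * (inner ℝ y.1 x.1 : ℝ) / (inner ℝ x.1 x.1 : ℝ)

lemma reflA_eq_sub {V : Type*} [NormedAddCommGroup V] [InnerProductSpace ℝ V] (x y : V × ℝ) :
    reflA x y = y - rk x y • x := rfl

lemma reflA_eq' {V : Type*} [NormedAddCommGroup V] [InnerProductSpace ℝ V]
    (v w : V) (a b : ℝ) (K : ℝ) (hK : rk (v, a) (w, b) = K)
    (w' : V) (b' : ℝ) (hw : w - K • v = w') (hb : b - K * a = b') :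
    reflA (v, a) (w, b) = (w', b') := by
  rw [reflA_eq_sub, hK, Prod.ext_iff]
  exact ⟨by simpa using hw, by simpa using hb⟩

/-- Membership lemmas for `PhiD2`. -/
lemma mem_short {i : Fin n} {σ : ℝ} (hσ : PM σ) (r : ℤ) :
    (σ • eps i, (r : ℝ)) ∈ PhiD2 n := Or.inl ⟨i, σ, hσ, r, rfl⟩

lemma mem_long {i j : Fin n} (hij : i ≠ j) {σ τ : ℝ} (hσ : PM σ) (hτ : PM τ) (r : ℤ) :
    (σ • eps i + τ • eps j, ((2 * r : ℤ) : ℝ)) ∈ PhiD2 n :=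
  Or.inr ⟨i, j, hij, σ, τ, hσ, hτ, r, rfl⟩

/-- Membership lemmas for `PsiID2`. -/
lemma psi_short_in {I : Set (Fin n)} {s : Fin n} (hs : s ∈ I) {σ : ℝ} (hσ : PM σ) (r : ℤ) :
    (σ • eps s, ((2 * r : ℤ) : ℝ)) ∈ PsiID2 n I := Or.inl ⟨s, hs, σ, hσ, r, rfl⟩

lemma psi_short_out {I : Set (Fin n)} {s : Fin n} (hs : s ∉ I) {σ : ℝ} (hσ : PM σ) (r : ℤ) :
    (σ • eps s, ((2 * r + 1 : ℤ) : ℝ)) ∈ PsiID2 n I := Or.inr (Or.inl ⟨s, hs, σ, hσ, r, rfl⟩)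

lemma psi_long {I : Set (Fin n)} {s t : Fin n} (hst : s ≠ t)
    (hc : (s ∈ I ∧ t ∈ I) ∨ (s ∉ I ∧ t ∉ I)) {σ τ : ℝ} (hσ : PM σ) (hτ : PM τ) (r : ℤ) :
    (σ • eps s + τ • eps t, ((2 * r : ℤ) : ℝ)) ∈ PsiID2 n I :=
  Or.inr (Or.inr ⟨s, t, hst, hc, σ, τ, hσ, hτ, r, rfl⟩)

end Stmt12Aux


section Stmt12F

attribute [local instance] Classical.propDecidable

variable {n : ℕ}

/-- The parity functional attached to `I`. -/
def Ff (I : Set (Fin n)) (x : Euc n × ℝ) : ℝ :=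
  x.2 - ∑ i : Fin n, Set.indicator {j | j ∉ I} (fun j => x.1 j) i

lemma Ff_sub_smul (I : Set (Fin n)) (x y : Euc n × ℝ) (k : ℝ) :
    Ff I (y - k • x) = Ff I y - k * Ff I x := by
  classical
  unfold Ff
  have h1 : ∀ i : Fin n, Set.indicator {j | j ∉ I} (fun j => (y - k • x).1 j) i
      = Set.indicator {j | j ∉ I} (fun j => y.1 j) i
        - k * Set.indicator {j | j ∉ I} (fun j => x.1 j) i := by
    intro i
    simp only [Set.indicator_apply, Prod.fst_sub, Prod.smul_fst, PiLp.sub_apply,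
      PiLp.smul_apply, smul_eq_mul]
    split_ifs <;> ring
  rw [Finset.sum_congr rfl (fun i _ => h1 i), Finset.sum_sub_distrib, ← Finset.mul_sum]
  simp only [Prod.snd_sub, Prod.smul_snd, smul_eq_mul]
  ring

lemma Ff_add (I : Set (Fin n)) (x y : Euc n × ℝ) : Ff I (x + y) = Ff I x + Ff I y := by
  classical
  unfold Ff
  have h1 : ∀ i : Fin n, Set.indicator {j | j ∉ I} (fun j => (x + y).1 j) i
      = Set.indicator {j | j ∉ I} (fun j => x.1 j) i
        + Set.indicator {j | j ∉ I} (fun j => y.1 j) i := by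
    intro i
    simp only [Set.indicator_apply, Prod.fst_add, PiLp.add_apply]
    split_ifs <;> ring
  rw [Finset.sum_congr rfl (fun i _ => h1 i), Finset.sum_add_distrib]
  simp only [Prod.snd_add]
  ring

lemma Ff_short (I : Set (Fin n)) (σ : ℝ) (s : Fin n) (c : ℝ) :
    Ff I (σ • eps s, c) = c - (if s ∈ I then 0 else σ) := by
  classical
  unfold Ff
  have h1 : ∀ i : Fin n, Set.indicator {j | j ∉ I} (fun j => (σ • eps s : Euc n) j) i
      = if i = s then (if s ∈ I then 0 else σ) else 0 := by
    intro i
    simp only [Set.indicator_apply, PiLp.smul_apply, smul_eq_mul, eps_apply, Set.mem_setOf_eq]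
    by_cases h : i = s
    · subst h; split_ifs <;> simp_all
    · split_ifs <;> simp_all
  rw [Finset.sum_congr rfl (fun i _ => h1 i), Finset.sum_ite_eq' Finset.univ s,
    if_pos (Finset.mem_univ s)]

lemma Ff_long (I : Set (Fin n)) (σ τ : ℝ) (s t : Fin n) (c : ℝ) :
    Ff I (σ • eps s + τ • eps t, c)
      = c - ((if s ∈ I then 0 else σ) + (if t ∈ I then 0 else τ)) := by
  have h : (σ • eps s + τ • eps t, c) = ((σ • eps s, c) : Euc n × ℝ) + (τ • eps t, (0 : ℝ)) := by
    simp [Prod.ext_iff]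
  rw [h, Ff_add, Ff_short, Ff_short]
  ring

/-- The characterization of `Ψ_I` via the parity functional. -/
lemma psi_char (I : Set (Fin n)) (x : Euc n × ℝ) :
    x ∈ PsiID2 n I ↔ x ∈ PhiD2 n ∧ ∃ m : ℤ, Ff I x = 2 * m := by
  constructor
  · rintro (⟨s, hs, σ, hσ, r, rfl⟩ | ⟨s, hs, σ, hσ, r, rfl⟩ |
      ⟨s, t, hst, hc, σ, τ, hσ, hτ, r, rfl⟩)
    · refine ⟨mem_short hσ _, r, ?_⟩
      rw [Ff_short, if_pos hs]
      push_cast; ring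
    · refine ⟨mem_short hσ _, ?_⟩
      rw [Ff_short, if_neg hs]
      rcases hσ with h | h
      · exact ⟨r, by rw [h]; push_cast; ring⟩
      · exact ⟨r + 1, by rw [h]; push_cast; ring⟩
    · refine ⟨mem_long hst hσ hτ _, ?_⟩
      rw [Ff_long]
      rcases hc with ⟨h1, h2⟩ | ⟨h1, h2⟩
      · rw [if_pos h1, if_pos h2]; exact ⟨r, by push_cast; ring⟩
      · rw [if_neg h1, if_neg h2]
        rcases hσ with h | h <;> rcases hτ with h' | h' <;> rw [h, h']
        · exact ⟨r - 1, by push_cast; ring⟩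
        · exact ⟨r, by push_cast; ring⟩
        · exact ⟨r, by push_cast; ring⟩
        · exact ⟨r + 1, by push_cast; ring⟩
  · rintro ⟨(⟨s, σ, hσ, r, rfl⟩ | ⟨s, t, hst, σ, τ, hσ, hτ, r, rfl⟩), m, hm⟩
    · rw [Ff_short] at hm
      by_cases hs : s ∈ I
      · rw [if_pos hs, sub_zero] at hm
        have : r = 2 * m := by exact_mod_cast hm
        rw [this]
        exact psi_short_in hs hσ m
      · rw [if_neg hs] at hm
        rcases hσ with h | h
        · rw [h] at hm
          have : r = 2 * m + 1 := by
            have : (r : ℝ) = 2 * m + 1 := by linarith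
            exact_mod_cast this
          rw [this]
          exact psi_short_out hs (σ := σ) (Or.inl h) m
        · rw [h] at hm
          have : r = 2 * (m - 1) + 1 := by
            have h2 : r = 2 * m - 1 := by
              have : (r : ℝ) = 2 * m - 1 := by linarith
              exact_mod_cast this
            omega
          rw [this]
          exact psi_short_out hs (σ := σ) (Or.inr h) (m - 1)
    · rw [Ff_long] at hm
      by_cases hs : s ∈ I <;> by_cases ht : t ∈ I
      · exact psi_long hst (Or.inl ⟨hs, ht⟩) hσ hτ r
      · exfalso
        rw [if_pos hs, if_neg ht, zero_add] at hm
        rcases hτ with h | h <;> rw [h] at hm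
        · have : 2 * r - 1 = 2 * m := by exact_mod_cast hm
          omega
        · have : 2 * r + 1 = 2 * m := by
            have : ((2 * r : ℤ) : ℝ) + 1 = 2 * m := by linarith
            exact_mod_cast this
          omega
      · exfalso
        rw [if_neg hs, if_pos ht, add_zero] at hm
        rcases hσ with h | h <;> rw [h] at hm
        · have : 2 * r - 1 = 2 * m := by exact_mod_cast hm
          omega
        · have : 2 * r + 1 = 2 * m := by
            have : ((2 * r : ℤ) : ℝ) + 1 = 2 * m := by linarith
            exact_mod_cast this
          omega
      · exact psi_long hst (Or.inr ⟨hs, ht⟩) hσ hτ r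

end Stmt12F


section Stmt12Refl

variable {n : ℕ}

lemma PM.mul' {σ τ : ℝ} (h : PM σ) (h' : PM τ) : PM (σ * τ) := by
  rcases h with h | h <;> rcases h' with h' | h' <;> simp [PM, h, h']

lemma smul_sign_add {σ : ℝ} (hσ : PM σ) (c τ : ℝ) (v w : Euc n) :
    (c * σ) • (σ • v + τ • w) = c • v + ((c * σ) * τ) • w := by
  rw [smul_add, smul_smul, smul_smul, mul_assoc c σ σ, hσ.sq, mul_one]

set_option maxHeartbeats 2000000 in
lemma phi_refl {x y : Euc n × ℝ} (hx : x ∈ PhiD2 n) (hy : y ∈ PhiD2 n) :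
    reflA x y ∈ PhiD2 n ∧ ∃ m : ℤ, rk x y = (m : ℝ) := by
  rcases hx with ⟨i, σ, hσ, a, rfl⟩ | ⟨i, j, hij, σ, τ, hσ, hτ, a, rfl⟩
  · rcases hy with ⟨i', σ', hσ', b, rfl⟩ | ⟨i', j', hij', σ', τ', hσ', hτ', b, rfl⟩
    · -- short, short
      by_cases h : i' = i
      · subst h
        obtain ⟨e, he⟩ := (hσ'.mul' hσ).int
        have hk : rk (σ • eps i', (a : ℝ)) (σ' • eps i', (b : ℝ)) = 2 * (σ' * σ) := by
          simp only [rk, inner_se]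
          rcases hσ with rfl | rfl <;> rcases hσ' with rfl | rfl <;> norm_num
        have hv : σ' • eps i' - (2 * (σ' * σ)) • (σ • eps i')
            = (σ' - 2 * (σ' * σ) * σ) • eps i' := by module
        have hb : (b : ℝ) - (2 * (σ' * σ)) * a = ((b - 2 * e * a : ℤ) : ℝ) := by
          push_cast; rw [he]; try ring
        have hki : rk (σ • eps i', (a : ℝ)) (σ' • eps i', (b : ℝ)) = ((2 * e : ℤ) : ℝ) := by
          rw [hk]
          push_cast [he]
          try ring
        refine ⟨?_, 2 * e, hki⟩
        rw [reflA_eq' _ _ _ _ _ hk _ _ hv hb]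
        refine mem_short ?_ _
        rcases hσ with rfl | rfl <;> rcases hσ' with rfl | rfl <;> norm_num [PM]
      · have h' : ¬ i = i' := fun hh => h hh.symm
        have hk : rk (σ • eps i, (a : ℝ)) (σ' • eps i', (b : ℝ)) = 0 := by
          simp only [rk, inner_se]
          simp [h']
        have hv : σ' • eps i' - (0 : ℝ) • (σ • eps i) = σ' • eps i' := by simp
        have hb : (b : ℝ) - 0 * (a : ℝ) = (b : ℝ) := by ring
        refine ⟨?_, 0, by rw [hk]; simp⟩
        rw [reflA_eq' _ _ _ _ _ hk _ _ hv hb]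
        exact mem_short hσ' b
    · -- short, long
      by_cases h1 : i = i'
      · subst h1
        have hneij' : i ≠ j' := hij'
        obtain ⟨e, he⟩ := (hσ'.mul' hσ).int
        have hk : rk (σ • eps i, (a : ℝ)) (σ' • eps i + τ' • eps j', ((2 * b : ℤ) : ℝ))
            = 2 * (σ' * σ) := by
          simp only [rk, inner_add_left, inner_se]
          rcases hσ with rfl | rfl <;> rcases hσ' with rfl | rfl <;>
            simp [hneij', hneij'.symm]
        have hv : (σ' • eps i + τ' • eps j') - (2 * (σ' * σ)) • (σ • eps i)
            = (σ' - 2 * (σ' * σ) * σ) • eps i + τ' • eps j' := by module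
        have hb : ((2 * b : ℤ) : ℝ) - (2 * (σ' * σ)) * a
            = ((2 * (b - e * a) : ℤ) : ℝ) := by
          push_cast; rw [he]; try ring
        refine ⟨?_, 2 * e, by rw [hk]; push_cast [he]; try ring⟩
        rw [reflA_eq' _ _ _ _ _ hk _ _ hv hb]
        refine mem_long hij' ?_ hτ' _
        rcases hσ with rfl | rfl <;> rcases hσ' with rfl | rfl <;> norm_num [PM]
      · by_cases h2 : i = j'
        · subst h2
          have hne : i ≠ i' := Ne.symm hij'
          obtain ⟨e, he⟩ := (hτ'.mul' hσ).int
          have hk : rk (σ • eps i, (a : ℝ)) (σ' • eps i' + τ' • eps i, ((2 * b : ℤ) : ℝ))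
              = 2 * (τ' * σ) := by
            simp only [rk, inner_add_left, inner_se]
            rcases hσ with rfl | rfl <;> rcases hτ' with rfl | rfl <;>
              simp [hne, hne.symm]
          have hv : (σ' • eps i' + τ' • eps i) - (2 * (τ' * σ)) • (σ • eps i)
              = σ' • eps i' + (τ' - 2 * (τ' * σ) * σ) • eps i := by module
          have hb : ((2 * b : ℤ) : ℝ) - (2 * (τ' * σ)) * a
              = ((2 * (b - e * a) : ℤ) : ℝ) := by
            push_cast; rw [he]; try ring
          refine ⟨?_, 2 * e, by rw [hk]; push_cast [he]; try ring⟩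
          rw [reflA_eq' _ _ _ _ _ hk _ _ hv hb]
          refine mem_long hij' hσ' ?_ _
          rcases hσ with rfl | rfl <;> rcases hτ' with rfl | rfl <;> norm_num [PM]
        · have hk : rk (σ • eps i, (a : ℝ))
              (σ' • eps i' + τ' • eps j', ((2 * b : ℤ) : ℝ)) = 0 := by
            simp only [rk, inner_add_left, inner_se]
            simp [h1, h2]
          have hv : (σ' • eps i' + τ' • eps j') - (0 : ℝ) • (σ • eps i)
              = σ' • eps i' + τ' • eps j' := by simp
          have hb : ((2 * b : ℤ) : ℝ) - 0 * (a : ℝ) = ((2 * b : ℤ) : ℝ) := by ring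
          refine ⟨?_, 0, by rw [hk]; simp⟩
          rw [reflA_eq' _ _ _ _ _ hk _ _ hv hb]
          exact mem_long hij' hσ' hτ' b
  · rcases hy with ⟨l, σ', hσ', b, rfl⟩ | ⟨i', j', hij', σ', τ', hσ', hτ', b, rfl⟩
    · -- long, short
      by_cases h1 : l = i
      · subst h1
        obtain ⟨e, he⟩ := (hσ'.mul' hσ).int
        have hk : rk (σ • eps l + τ • eps j, ((2 * a : ℤ) : ℝ)) (σ' • eps l, (b : ℝ))
            = σ' * σ := by
          simp only [rk, inner_add_left, inner_add_right, inner_se]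
          rcases hσ with rfl | rfl <;> rcases hτ with rfl | rfl <;>
            rcases hσ' with rfl | rfl <;> simp [hij, hij.symm] <;> norm_num
        have hx1 : (σ' * σ) • (σ • eps l + τ • eps j)
            = σ' • eps l + ((σ' * σ) * τ) • eps j := smul_sign_add hσ _ _ _ _
        have hv : σ' • eps l - (σ' * σ) • (σ • eps l + τ • eps j)
            = (-(σ' * σ * τ)) • eps j := by rw [hx1]; module
        have hb : (b : ℝ) - (σ' * σ) * ((2 * a : ℤ) : ℝ) = ((b - e * (2 * a) : ℤ) : ℝ) := by
          push_cast; rw [he]; try ring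
        refine ⟨?_, e, by rw [he, hk]⟩
        rw [reflA_eq' _ _ _ _ _ hk _ _ hv hb]
        refine mem_short ?_ _
        rcases hσ with rfl | rfl <;> rcases hτ with rfl | rfl <;>
          rcases hσ' with rfl | rfl <;> norm_num [PM]
      · by_cases h2 : l = j
        · subst h2
          obtain ⟨e, he⟩ := (hσ'.mul' hτ).int
          have hk : rk (σ • eps i + τ • eps l, ((2 * a : ℤ) : ℝ)) (σ' • eps l, (b : ℝ))
              = σ' * τ := by
            simp only [rk, inner_add_left, inner_add_right, inner_se]
            rcases hσ with rfl | rfl <;> rcases hτ with rfl | rfl <;>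
              rcases hσ' with rfl | rfl <;> simp [hij, hij.symm] <;> norm_num
          have hx1 : (σ' * τ) • (σ • eps i + τ • eps l)
              = σ' • eps l + ((σ' * τ) * σ) • eps i := by
            rw [add_comm (σ • eps i)]; exact smul_sign_add hτ _ _ _ _
          have hv : σ' • eps l - (σ' * τ) • (σ • eps i + τ • eps l)
              = (-(σ' * τ * σ)) • eps i := by rw [hx1]; module
          have hb : (b : ℝ) - (σ' * τ) * ((2 * a : ℤ) : ℝ)
              = ((b - e * (2 * a) : ℤ) : ℝ) := by
            push_cast; rw [he]; try ring
          refine ⟨?_, e, by rw [he, hk]⟩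
          rw [reflA_eq' _ _ _ _ _ hk _ _ hv hb]
          refine mem_short ?_ _
          rcases hσ with rfl | rfl <;> rcases hτ with rfl | rfl <;>
            rcases hσ' with rfl | rfl <;> norm_num [PM]
        · have hk : rk (σ • eps i + τ • eps j, ((2 * a : ℤ) : ℝ)) (σ' • eps l, (b : ℝ))
              = 0 := by
            have h1' : ¬ i = l := fun hh => h1 hh.symm
            have h2' : ¬ j = l := fun hh => h2 hh.symm
            simp only [rk, inner_add_left, inner_add_right, inner_se]
            simp [h1', h2']
          have hv : σ' • eps l - (0 : ℝ) • (σ • eps i + τ • eps j) = σ' • eps l := by simp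
          have hb : (b : ℝ) - 0 * ((2 * a : ℤ) : ℝ) = (b : ℝ) := by ring
          refine ⟨?_, 0, by rw [hk]; simp⟩
          rw [reflA_eq' _ _ _ _ _ hk _ _ hv hb]
          exact mem_short hσ' b
    · -- long, long
      by_cases e1 : i' = i
      · subst e1
        by_cases e2 : j' = j
        · subst e2
          by_cases hc : σ * σ' = τ * τ'
          · obtain ⟨e, he⟩ := (hσ'.mul' hσ).int
            have hk : rk (σ • eps i' + τ • eps j', ((2 * a : ℤ) : ℝ))
                (σ' • eps i' + τ' • eps j', ((2 * b : ℤ) : ℝ)) = 2 * (σ' * σ) := by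
              simp only [rk, inner_add_left, inner_add_right, inner_se]
              rcases hσ with rfl | rfl <;> rcases hτ with rfl | rfl <;>
                rcases hσ' with rfl | rfl <;> rcases hτ' with rfl | rfl <;>
                simp [hij, hij.symm] <;> (revert hc; norm_num)
            have hv : (σ' • eps i' + τ' • eps j')
                - (2 * (σ' * σ)) • (σ • eps i' + τ • eps j')
                = (σ' - 2 * (σ' * σ) * σ) • eps i' + (τ' - 2 * (σ' * σ) * τ) • eps j' := by
              module
            have hb : ((2 * b : ℤ) : ℝ) - (2 * (σ' * σ)) * ((2 * a : ℤ) : ℝ)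
                = ((2 * (b - 2 * e * a) : ℤ) : ℝ) := by
              push_cast; rw [he]; try ring
            refine ⟨?_, 2 * e, by rw [hk]; push_cast [he]; try ring⟩
            rw [reflA_eq' _ _ _ _ _ hk _ _ hv hb]
            refine mem_long hij ?_ ?_ _ <;>
              (rcases hσ with rfl | rfl <;> rcases hτ with rfl | rfl <;>
                rcases hσ' with rfl | rfl <;> rcases hτ' with rfl | rfl <;>
                (revert hc; norm_num [PM]))
          · have hk : rk (σ • eps i' + τ • eps j', ((2 * a : ℤ) : ℝ))
                (σ' • eps i' + τ' • eps j', ((2 * b : ℤ) : ℝ)) = 0 := by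
              simp only [rk, inner_add_left, inner_add_right, inner_se]
              rcases hσ with rfl | rfl <;> rcases hτ with rfl | rfl <;>
                rcases hσ' with rfl | rfl <;> rcases hτ' with rfl | rfl <;>
                simp [hij, hij.symm] <;> (revert hc; norm_num)
            have hv : (σ' • eps i' + τ' • eps j')
                - (0 : ℝ) • (σ • eps i' + τ • eps j')
                = σ' • eps i' + τ' • eps j' := by simp
            have hb : ((2 * b : ℤ) : ℝ) - 0 * ((2 * a : ℤ) : ℝ) = ((2 * b : ℤ) : ℝ) := by
              ring
            refine ⟨?_, 0, by rw [hk]; simp⟩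
            rw [reflA_eq' _ _ _ _ _ hk _ _ hv hb]
            exact mem_long hij' hσ' hτ' b
        · -- i' = i, j' ∉ {i, j}
          have e2' : ¬ j = j' := fun hh => e2 hh.symm
          obtain ⟨e, he⟩ := (hσ'.mul' hσ).int
          have hk : rk (σ • eps i' + τ • eps j, ((2 * a : ℤ) : ℝ))
              (σ' • eps i' + τ' • eps j', ((2 * b : ℤ) : ℝ)) = σ' * σ := by
            simp only [rk, inner_add_left, inner_add_right, inner_se]
            rcases hσ with rfl | rfl <;> rcases hτ with rfl | rfl <;>
              rcases hσ' with rfl | rfl <;> rcases hτ' with rfl | rfl <;>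
              simp [hij, hij.symm, hij', e2'] <;> norm_num
          have hx1 : (σ' * σ) • (σ • eps i' + τ • eps j)
              = σ' • eps i' + ((σ' * σ) * τ) • eps j := smul_sign_add hσ _ _ _ _
          have hv : (σ' • eps i' + τ' • eps j') - (σ' * σ) • (σ • eps i' + τ • eps j)
              = (-(σ' * σ * τ)) • eps j + τ' • eps j' := by rw [hx1]; module
          have hb : ((2 * b : ℤ) : ℝ) - (σ' * σ) * ((2 * a : ℤ) : ℝ)
              = ((2 * (b - e * a) : ℤ) : ℝ) := by
            push_cast; rw [he]; try ring
          refine ⟨?_, e, by rw [he, hk]⟩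
          rw [reflA_eq' _ _ _ _ _ hk _ _ hv hb]
          refine mem_long (fun hh => e2 hh.symm) ?_ hτ' _
          rcases hσ with rfl | rfl <;> rcases hτ with rfl | rfl <;>
            rcases hσ' with rfl | rfl <;> norm_num [PM]
      · by_cases e3 : i' = j
        · subst e3
          by_cases e4 : j' = i
          · subst e4
            by_cases hc : σ * τ' = τ * σ'
            · obtain ⟨e, he⟩ := (hσ'.mul' hτ).int
              have hk : rk (σ • eps j' + τ • eps i', ((2 * a : ℤ) : ℝ))
                  (σ' • eps i' + τ' • eps j', ((2 * b : ℤ) : ℝ)) = 2 * (σ' * τ) := by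
                simp only [rk, inner_add_left, inner_add_right, inner_se]
                rcases hσ with rfl | rfl <;> rcases hτ with rfl | rfl <;>
                  rcases hσ' with rfl | rfl <;> rcases hτ' with rfl | rfl <;>
                  simp [hij, hij.symm, hij', Ne.symm hij'] <;> (revert hc; norm_num)
              have hv : (σ' • eps i' + τ' • eps j')
                  - (2 * (σ' * τ)) • (σ • eps j' + τ • eps i')
                  = (τ' - 2 * (σ' * τ) * σ) • eps j' + (σ' - 2 * (σ' * τ) * τ) • eps i' := by
                module
              have hb : ((2 * b : ℤ) : ℝ) - (2 * (σ' * τ)) * ((2 * a : ℤ) : ℝ)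
                  = ((2 * (b - 2 * e * a) : ℤ) : ℝ) := by
                push_cast; rw [he]; try ring
              refine ⟨?_, 2 * e, by rw [hk]; push_cast [he]; try ring⟩
              rw [reflA_eq' _ _ _ _ _ hk _ _ hv hb]
              refine mem_long hij ?_ ?_ _ <;>
                (rcases hσ with rfl | rfl <;> rcases hτ with rfl | rfl <;>
                  rcases hσ' with rfl | rfl <;> rcases hτ' with rfl | rfl <;>
                  (revert hc; norm_num [PM]))
            · have hk : rk (σ • eps j' + τ • eps i', ((2 * a : ℤ) : ℝ))
                  (σ' • eps i' + τ' • eps j', ((2 * b : ℤ) : ℝ)) = 0 := by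
                simp only [rk, inner_add_left, inner_add_right, inner_se]
                rcases hσ with rfl | rfl <;> rcases hτ with rfl | rfl <;>
                  rcases hσ' with rfl | rfl <;> rcases hτ' with rfl | rfl <;>
                  simp [hij, hij.symm, hij', Ne.symm hij'] <;> (revert hc; norm_num)
              have hv : (σ' • eps i' + τ' • eps j')
                  - (0 : ℝ) • (σ • eps j' + τ • eps i')
                  = σ' • eps i' + τ' • eps j' := by simp
              have hb : ((2 * b : ℤ) : ℝ) - 0 * ((2 * a : ℤ) : ℝ) = ((2 * b : ℤ) : ℝ) := by
                ring
              refine ⟨?_, 0, by rw [hk]; simp⟩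
              rw [reflA_eq' _ _ _ _ _ hk _ _ hv hb]
              exact mem_long hij' hσ' hτ' b
          · -- i' = j, j' ∉ {i, j}
            have e4' : ¬ i = j' := fun hh => e4 hh.symm
            obtain ⟨e, he⟩ := (hσ'.mul' hτ).int
            have hk : rk (σ • eps i + τ • eps i', ((2 * a : ℤ) : ℝ))
                (σ' • eps i' + τ' • eps j', ((2 * b : ℤ) : ℝ)) = σ' * τ := by
              simp only [rk, inner_add_left, inner_add_right, inner_se]
              rcases hσ with rfl | rfl <;> rcases hτ with rfl | rfl <;>
                rcases hσ' with rfl | rfl <;> rcases hτ' with rfl | rfl <;>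
                simp [hij, hij.symm, hij', e4'] <;> norm_num
            have hx1 : (σ' * τ) • (σ • eps i + τ • eps i')
                = σ' • eps i' + ((σ' * τ) * σ) • eps i := by
              rw [add_comm (σ • eps i)]; exact smul_sign_add hτ _ _ _ _
            have hv : (σ' • eps i' + τ' • eps j') - (σ' * τ) • (σ • eps i + τ • eps i')
                = (-(σ' * τ * σ)) • eps i + τ' • eps j' := by rw [hx1]; module
            have hb : ((2 * b : ℤ) : ℝ) - (σ' * τ) * ((2 * a : ℤ) : ℝ)
                = ((2 * (b - e * a) : ℤ) : ℝ) := by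
              push_cast; rw [he]; try ring
            refine ⟨?_, e, by rw [he, hk]⟩
            rw [reflA_eq' _ _ _ _ _ hk _ _ hv hb]
            refine mem_long e4' ?_ hτ' _
            rcases hσ with rfl | rfl <;> rcases hτ with rfl | rfl <;>
              rcases hσ' with rfl | rfl <;> norm_num [PM]
        · by_cases e5 : j' = i
          · subst e5
            -- j' = i, i' ∉ {i, j}
            obtain ⟨e, he⟩ := (hτ'.mul' hσ).int
            have hk : rk (σ • eps j' + τ • eps j, ((2 * a : ℤ) : ℝ))
                (σ' • eps i' + τ' • eps j', ((2 * b : ℤ) : ℝ)) = τ' * σ := by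
              simp only [rk, inner_add_left, inner_add_right, inner_se]
              have g1 : ¬ j' = i' := fun hh => e1 hh.symm
              have g2 : ¬ j = i' := fun hh => e3 hh.symm
              rcases hσ with rfl | rfl <;> rcases hτ with rfl | rfl <;>
                rcases hσ' with rfl | rfl <;> rcases hτ' with rfl | rfl <;>
                simp [hij, hij.symm, g1, g2] <;> norm_num
            have hx1 : (τ' * σ) • (σ • eps j' + τ • eps j)
                = τ' • eps j' + ((τ' * σ) * τ) • eps j := smul_sign_add hσ _ _ _ _
            have hv : (σ' • eps i' + τ' • eps j') - (τ' * σ) • (σ • eps j' + τ • eps j)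
                = σ' • eps i' + (-(τ' * σ * τ)) • eps j := by rw [hx1]; module
            have hb : ((2 * b : ℤ) : ℝ) - (τ' * σ) * ((2 * a : ℤ) : ℝ)
                = ((2 * (b - e * a) : ℤ) : ℝ) := by
              push_cast; rw [he]; try ring
            refine ⟨?_, e, by rw [he, hk]⟩
            rw [reflA_eq' _ _ _ _ _ hk _ _ hv hb]
            refine mem_long e3 hσ' ?_ _
            rcases hσ with rfl | rfl <;> rcases hτ with rfl | rfl <;>
              rcases hτ' with rfl | rfl <;> norm_num [PM]
          · by_cases e6 : j' = j
            · subst e6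
              -- j' = j, i' ∉ {i, j}
              obtain ⟨e, he⟩ := (hτ'.mul' hτ).int
              have hk : rk (σ • eps i + τ • eps j', ((2 * a : ℤ) : ℝ))
                  (σ' • eps i' + τ' • eps j', ((2 * b : ℤ) : ℝ)) = τ' * τ := by
                simp only [rk, inner_add_left, inner_add_right, inner_se]
                have g1 : ¬ i = i' := fun hh => e1 hh.symm
                have g2 : ¬ i = j' := hij
                have g3 : ¬ j' = i' := fun hh => e3 hh.symm
                rcases hσ with rfl | rfl <;> rcases hτ with rfl | rfl <;>
                  rcases hσ' with rfl | rfl <;> rcases hτ' with rfl | rfl <;>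
                  simp [hij, hij.symm, g1, g2, g3] <;> norm_num
              have hx1 : (τ' * τ) • (σ • eps i + τ • eps j')
                  = τ' • eps j' + ((τ' * τ) * σ) • eps i := by
                rw [add_comm (σ • eps i)]; exact smul_sign_add hτ _ _ _ _
              have hv : (σ' • eps i' + τ' • eps j') - (τ' * τ) • (σ • eps i + τ • eps j')
                  = σ' • eps i' + (-(τ' * τ * σ)) • eps i := by rw [hx1]; module
              have hb : ((2 * b : ℤ) : ℝ) - (τ' * τ) * ((2 * a : ℤ) : ℝ)
                  = ((2 * (b - e * a) : ℤ) : ℝ) := by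
                push_cast; rw [he]; try ring
              refine ⟨?_, e, by rw [he, hk]⟩
              rw [reflA_eq' _ _ _ _ _ hk _ _ hv hb]
              refine mem_long e1 hσ' ?_ _
              rcases hσ with rfl | rfl <;> rcases hτ with rfl | rfl <;>
                rcases hτ' with rfl | rfl <;> norm_num [PM]
            · -- disjoint
              have hk : rk (σ • eps i + τ • eps j, ((2 * a : ℤ) : ℝ))
                  (σ' • eps i' + τ' • eps j', ((2 * b : ℤ) : ℝ)) = 0 := by
                have f1 : ¬ i = i' := fun hh => e1 hh.symm
                have f2 : ¬ j = i' := fun hh => e3 hh.symm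
                have f3 : ¬ i = j' := fun hh => e5 hh.symm
                have f4 : ¬ j = j' := fun hh => e6 hh.symm
                simp only [rk, inner_add_left, inner_add_right, inner_se]
                simp [f1, f2, f3, f4]
              have hv : (σ' • eps i' + τ' • eps j')
                  - (0 : ℝ) • (σ • eps i + τ • eps j)
                  = σ' • eps i' + τ' • eps j' := by simp
              have hb : ((2 * b : ℤ) : ℝ) - 0 * ((2 * a : ℤ) : ℝ) = ((2 * b : ℤ) : ℝ) := by
                ring
              refine ⟨?_, 0, by rw [hk]; simp⟩
              rw [reflA_eq' _ _ _ _ _ hk _ _ hv hb]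
              exact mem_long hij' hσ' hτ' b

end Stmt12Refl


section Stmt12Max

variable {n : ℕ}

lemma pair_add_eq {v w u : Euc n} {a b c : ℝ} (hv : v + w = u) (hc : a + b = c) :
    ((v, a) : Euc n × ℝ) + (w, b) = (u, c) := by
  rw [Prod.mk_add_mk, hv, hc]

/-- A closed subroot system containing `Ψ_I` (without the properness condition). -/
structure GoodSet (n : ℕ) (I : Set (Fin n)) (Δ : Set (Euc n × ℝ)) : Prop where
  sub : Δ ⊆ PhiD2 n
  refl : ∀ x ∈ Δ, ∀ y ∈ Δ, reflA x y ∈ Δ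
  addc : ∀ x ∈ Δ, ∀ y ∈ Δ, x + y ∈ PhiD2 n → x + y ∈ Δ
  psi : PsiID2 n I ⊆ Δ

lemma ML1 {I : Set (Fin n)} {Δ} (h : GoodSet n I Δ) {s t : Fin n} (hs : s ∈ I) (ht : t ∉ I)
    {σ τ : ℝ} (hσ : PM σ) (hτ : PM τ) {a : ℤ}
    (hx : (σ • eps s + τ • eps t, ((2 * a : ℤ) : ℝ)) ∈ Δ) :
    ∀ ρ : ℝ, PM ρ → ∀ m : ℤ, (ρ • eps s, ((2 * m + 1 : ℤ) : ℝ)) ∈ Δ := by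
  have hst : s ≠ t := fun hh => ht (hh ▸ hs)
  intro ρ hρ m
  rcases hρ.eq_or_eq_neg hσ with hρσ | hρσ <;> rw [hρσ]
  · have hz : ((-τ) • eps t, ((2 * (m - a) + 1 : ℤ) : ℝ)) ∈ Δ :=
      h.psi (psi_short_out ht hτ.neg' _)
    have hsum : (σ • eps s + τ • eps t, ((2 * a : ℤ) : ℝ))
        + ((-τ) • eps t, ((2 * (m - a) + 1 : ℤ) : ℝ))
        = (σ • eps s, ((2 * m + 1 : ℤ) : ℝ)) :=
      pair_add_eq (by module) (by push_cast; ring)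
    have := h.addc _ hx _ hz (by rw [hsum]; exact mem_short hσ _)
    rwa [hsum] at this
  · have hz : (τ • eps t, ((2 * (m + a) + 1 : ℤ) : ℝ)) ∈ Δ :=
      h.psi (psi_short_out ht hτ _)
    have hr := h.refl _ hx _ hz
    have hk : rk (σ • eps s + τ • eps t, ((2 * a : ℤ) : ℝ))
        (τ • eps t, ((2 * (m + a) + 1 : ℤ) : ℝ)) = 1 := by
      simp only [rk, inner_add_left, inner_add_right, inner_se]
      rcases hσ with rfl | rfl <;> rcases hτ with rfl | rfl <;>
        simp [hst, hst.symm] <;> norm_num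
    have heq : reflA (σ • eps s + τ • eps t, ((2 * a : ℤ) : ℝ))
        (τ • eps t, ((2 * (m + a) + 1 : ℤ) : ℝ))
        = ((-σ) • eps s, ((2 * m + 1 : ℤ) : ℝ)) :=
      reflA_eq' _ _ _ _ _ hk _ _ (by module) (by push_cast; ring)
    rwa [heq] at hr

lemma ML2 {I : Set (Fin n)} {Δ} (h : GoodSet n I Δ) {s t0 : Fin n} (hs : s ∈ I)
    (ht0 : t0 ∉ I) {σ : ℝ} (hσ : PM σ) {a : ℤ}
    (hx : (σ • eps s, ((2 * a + 1 : ℤ) : ℝ)) ∈ Δ) :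
    ∀ u ∈ I, ∀ ρ : ℝ, PM ρ → ∀ m : ℤ, (ρ • eps u, ((2 * m + 1 : ℤ) : ℝ)) ∈ Δ := by
  have hst : s ≠ t0 := fun hh => ht0 (hh ▸ hs)
  have hz : ((1 : ℝ) • eps t0, ((2 * 0 + 1 : ℤ) : ℝ)) ∈ Δ :=
    h.psi (psi_short_out ht0 PM.one' 0)
  have hsum : (σ • eps s, ((2 * a + 1 : ℤ) : ℝ)) + ((1 : ℝ) • eps t0, ((2 * 0 + 1 : ℤ) : ℝ))
      = (σ • eps s + (1 : ℝ) • eps t0, ((2 * (a + 1) : ℤ) : ℝ)) :=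
    pair_add_eq rfl (by push_cast; ring)
  have hw : (σ • eps s + (1 : ℝ) • eps t0, ((2 * (a + 1) : ℤ) : ℝ)) ∈ Δ := by
    have := h.addc _ hx _ hz (by rw [hsum]; exact mem_long hst hσ PM.one' _)
    rwa [hsum] at this
  have hodd_s := ML1 h hs ht0 hσ PM.one' hw
  intro u hu ρ hρ m
  by_cases hus : u = s
  · subst hus; exact hodd_s ρ hρ m
  · have hsu : s ≠ u := fun hh => hus hh.symm
    have hz2 : ((-σ) • eps s + ρ • eps u, ((2 * 0 : ℤ) : ℝ)) ∈ Δ :=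
      h.psi (psi_long hsu (Or.inl ⟨hs, hu⟩) hσ.neg' hρ 0)
    have hsum2 : (σ • eps s, ((2 * m + 1 : ℤ) : ℝ)) + ((-σ) • eps s + ρ • eps u, ((2 * 0 : ℤ) : ℝ))
        = (ρ • eps u, ((2 * m + 1 : ℤ) : ℝ)) :=
      pair_add_eq (by module) (by push_cast; ring)
    have := h.addc _ (hodd_s σ hσ m) _ hz2 (by rw [hsum2]; exact mem_short hρ _)
    rwa [hsum2] at this

lemma ML3 {I : Set (Fin n)} {Δ} (h : GoodSet n I Δ) {s t : Fin n} (hs : s ∈ I) (ht : t ∉ I)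
    {σ τ : ℝ} (hσ : PM σ) (hτ : PM τ) {a : ℤ}
    (hx : (σ • eps s + τ • eps t, ((2 * a : ℤ) : ℝ)) ∈ Δ) :
    ∀ u ∉ I, ∀ ρ : ℝ, PM ρ → ∀ m : ℤ, (ρ • eps u, ((2 * m : ℤ) : ℝ)) ∈ Δ := by
  intro u hu ρ hρ m
  have hsu : s ≠ u := fun hh => hu (hh ▸ hs)
  have h1 : ((1 : ℝ) • eps s, ((2 * 0 + 1 : ℤ) : ℝ)) ∈ Δ := ML1 h hs ht hσ hτ hx 1 PM.one' 0
  have h2 : (ρ • eps u, ((2 * 0 + 1 : ℤ) : ℝ)) ∈ Δ := h.psi (psi_short_out hu hρ 0)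
  have hsum : ((1 : ℝ) • eps s, ((2 * 0 + 1 : ℤ) : ℝ)) + (ρ • eps u, ((2 * 0 + 1 : ℤ) : ℝ))
      = ((1 : ℝ) • eps s + ρ • eps u, ((2 * 1 : ℤ) : ℝ)) :=
    pair_add_eq rfl (by push_cast; ring)
  have hw : ((1 : ℝ) • eps s + ρ • eps u, ((2 * 1 : ℤ) : ℝ)) ∈ Δ := by
    have := h.addc _ h1 _ h2 (by rw [hsum]; exact mem_long hsu PM.one' hρ _)
    rwa [hsum] at this
  have h3 : ((-1 : ℝ) • eps s, ((2 * (m - 1) : ℤ) : ℝ)) ∈ Δ :=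
    h.psi (psi_short_in hs PM.one'.neg' _)
  have hsum2 : ((1 : ℝ) • eps s + ρ • eps u, ((2 * 1 : ℤ) : ℝ))
      + ((-1 : ℝ) • eps s, ((2 * (m - 1) : ℤ) : ℝ))
      = (ρ • eps u, ((2 * m : ℤ) : ℝ)) :=
    pair_add_eq (by module) (by push_cast; ring)
  have := h.addc _ hw _ h3 (by rw [hsum2]; exact mem_short hρ _)
  rwa [hsum2] at this

lemma ML4 {I : Set (Fin n)} {Δ} (h : GoodSet n I Δ) {s t : Fin n} (hs : s ∈ I) (ht : t ∉ I)
    {σ τ : ℝ} (hσ : PM σ) (hτ : PM τ) {a : ℤ}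
    (hx : (σ • eps s + τ • eps t, ((2 * a : ℤ) : ℝ)) ∈ Δ) :
    ∀ v ∈ I, ∀ w ∉ I, ∀ ρ ρ' : ℝ, PM ρ → PM ρ' → ∀ b : ℤ,
      (ρ • eps v + ρ' • eps w, ((2 * b : ℤ) : ℝ)) ∈ Δ := by
  intro v hv w hw ρ ρ' hρ hρ' b
  have hvw : v ≠ w := fun hh => hw (hh ▸ hv)
  have hseed : (σ • eps s, ((2 * 0 + 1 : ℤ) : ℝ)) ∈ Δ := ML1 h hs ht hσ hτ hx σ hσ 0
  have h1 : (ρ • eps v, ((2 * 0 + 1 : ℤ) : ℝ)) ∈ Δ := ML2 h hs ht hσ hseed v hv ρ hρ 0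
  have h2 : (ρ' • eps w, ((2 * (b - 1) + 1 : ℤ) : ℝ)) ∈ Δ := h.psi (psi_short_out hw hρ' _)
  have hsum : (ρ • eps v, ((2 * 0 + 1 : ℤ) : ℝ)) + (ρ' • eps w, ((2 * (b - 1) + 1 : ℤ) : ℝ))
      = (ρ • eps v + ρ' • eps w, ((2 * b : ℤ) : ℝ)) :=
    pair_add_eq rfl (by push_cast; ring)
  have := h.addc _ h1 _ h2 (by rw [hsum]; exact mem_long hvw hρ hρ' _)
  rwa [hsum] at this

lemma MLmain {I : Set (Fin n)} {Δ} (h : GoodSet n I Δ) {s t : Fin n} (hs : s ∈ I) (ht : t ∉ I)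
    {σ τ : ℝ} (hσ : PM σ) (hτ : PM τ) {a : ℤ}
    (hx : (σ • eps s + τ • eps t, ((2 * a : ℤ) : ℝ)) ∈ Δ) : PhiD2 n ⊆ Δ := by
  intro y hy
  rcases hy with ⟨v, ρ, hρ, r, rfl⟩ | ⟨v, w, hvw, ρ, ρ', hρ, hρ', r, rfl⟩
  · rcases Int.even_or_odd r with ⟨m, hm⟩ | ⟨m, hm⟩
    · rw [show (r : ℤ) = 2 * m from by omega]
      by_cases hv : v ∈ I
      · exact h.psi (psi_short_in hv hρ m)
      · exact ML3 h hs ht hσ hτ hx v hv ρ hρ m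
    · rw [show (r : ℤ) = 2 * m + 1 from hm]
      by_cases hv : v ∈ I
      · exact ML2 h hs ht hσ (ML1 h hs ht hσ hτ hx σ hσ 0) v hv ρ hρ m
      · exact h.psi (psi_short_out hv hρ m)
  · by_cases hv : v ∈ I <;> by_cases hw : w ∈ I
    · exact h.psi (psi_long hvw (Or.inl ⟨hv, hw⟩) hρ hρ' r)
    · exact ML4 h hs ht hσ hτ hx v hv w hw ρ ρ' hρ hρ' r
    · have hcomm : ((ρ' • eps w + ρ • eps v, ((2 * r : ℤ) : ℝ)) : Euc n × ℝ)
          = (ρ • eps v + ρ' • eps w, ((2 * r : ℤ) : ℝ)) := by rw [add_comm]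
      exact hcomm ▸ ML4 h hs ht hσ hτ hx w hw v hv ρ' ρ hρ' hρ r
    · exact h.psi (psi_long hvw (Or.inr ⟨hv, hw⟩) hρ hρ' r)

lemma MLempty {I : Set (Fin n)} {Δ} (h : GoodSet n I Δ) (hI0 : I = ∅) (hn : 2 ≤ n)
    {s : Fin n} {σ : ℝ} (hσ : PM σ) {a : ℤ}
    (hx : (σ • eps s, ((2 * a : ℤ) : ℝ)) ∈ Δ) : PhiD2 n ⊆ Δ := by
  have hnotI : ∀ u : Fin n, u ∉ I := by simp [hI0]
  have step : ∀ s' : Fin n, ∀ σ' : ℝ, PM σ' → ∀ a' : ℤ,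
      (σ' • eps s', ((2 * a' : ℤ) : ℝ)) ∈ Δ →
      ∀ u, u ≠ s' → ∀ ρ : ℝ, PM ρ → ∀ m : ℤ, (ρ • eps u, ((2 * m : ℤ) : ℝ)) ∈ Δ := by
    intro s' σ' hσ' a' hx' u hu ρ hρ m
    have hsu : s' ≠ u := fun hh => hu hh.symm
    have hz : (σ' • eps s' + (-ρ) • eps u, ((2 * (a' - m) : ℤ) : ℝ)) ∈ Δ :=
      h.psi (psi_long hsu (Or.inr ⟨hnotI s', hnotI u⟩) hσ' hρ.neg' _)
    have hr := h.refl _ hz _ hx'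
    have hk : rk (σ' • eps s' + (-ρ) • eps u, ((2 * (a' - m) : ℤ) : ℝ))
        (σ' • eps s', ((2 * a' : ℤ) : ℝ)) = 1 := by
      simp only [rk, inner_add_left, inner_add_right, inner_se]
      rcases hσ' with rfl | rfl <;> rcases hρ with rfl | rfl <;>
        simp [hsu, hu] <;> norm_num
    have heq : reflA (σ' • eps s' + (-ρ) • eps u, ((2 * (a' - m) : ℤ) : ℝ))
        (σ' • eps s', ((2 * a' : ℤ) : ℝ)) = (ρ • eps u, ((2 * m : ℤ) : ℝ)) :=
      reflA_eq' _ _ _ _ _ hk _ _ (by module) (by push_cast; ring)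
    rwa [heq] at hr
  have all_even : ∀ u : Fin n, ∀ ρ : ℝ, PM ρ → ∀ m : ℤ,
      (ρ • eps u, ((2 * m : ℤ) : ℝ)) ∈ Δ := by
    intro u ρ hρ m
    by_cases hus : u = s
    · subst hus
      haveI : Nontrivial (Fin n) := Fin.nontrivial_iff_two_le.mpr hn
      obtain ⟨u', hu'⟩ := exists_ne u
      have h1 := step u σ hσ a hx u' hu' 1 PM.one' 0
      exact step u' 1 PM.one' 0 h1 u (Ne.symm hu') ρ hρ m
    · exact step s σ hσ a hx u hus ρ hρ m
  intro y hy
  rcases hy with ⟨v, ρ, hρ, r, rfl⟩ | ⟨v, w, hvw, ρ, ρ', hρ, hρ', r, rfl⟩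
  · rcases Int.even_or_odd r with ⟨m, hm⟩ | ⟨m, hm⟩
    · rw [show (r : ℤ) = 2 * m from by omega]
      exact all_even v ρ hρ m
    · rw [show (r : ℤ) = 2 * m + 1 from hm]
      exact h.psi (psi_short_out (hnotI v) hρ m)
  · exact h.psi (psi_long hvw (Or.inr ⟨hnotI v, hnotI w⟩) hρ hρ' r)

lemma max_key (hn : 2 ≤ n) {I : Set (Fin n)} (hI : I ≠ Set.univ) {Δ} (h : GoodSet n I Δ)
    {x} (hxΔ : x ∈ Δ) (hxΨ : x ∉ PsiID2 n I) : PhiD2 n ⊆ Δ := by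
  obtain ⟨t0, ht0⟩ : ∃ t0, t0 ∉ I := by
    by_contra hco
    push_neg at hco
    exact hI (Set.eq_univ_of_forall hco)
  have hxΦ := h.sub hxΔ
  rcases hxΦ with ⟨s, σ, hσ, r, hxeq⟩ | ⟨s, t, hst, σ, τ, hσ, hτ, r, hxeq⟩
  · subst hxeq
    rcases Int.even_or_odd r with ⟨m, hm⟩ | ⟨m, hm⟩
    · rw [show (r : ℤ) = 2 * m from by omega] at hxΔ hxΨ
      by_cases hs : s ∈ I
      · exact absurd (psi_short_in hs hσ m) hxΨ
      · rcases Set.eq_empty_or_nonempty I with hI0 | ⟨v, hv⟩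
        · exact MLempty h hI0 hn hσ hxΔ
        · have hz : ((1 : ℝ) • eps v, ((2 * 0 : ℤ) : ℝ)) ∈ Δ := h.psi (psi_short_in hv PM.one' 0)
          have hvs : v ≠ s := fun hh => hs (hh ▸ hv)
          have hsum : (σ • eps s, ((2 * m : ℤ) : ℝ)) + ((1 : ℝ) • eps v, ((2 * 0 : ℤ) : ℝ))
              = ((1 : ℝ) • eps v + σ • eps s, ((2 * m : ℤ) : ℝ)) :=
            pair_add_eq (by module) (by push_cast; ring)
          have hw : ((1 : ℝ) • eps v + σ • eps s, ((2 * m : ℤ) : ℝ)) ∈ Δ := by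
            have := h.addc _ hxΔ _ hz (by rw [hsum]; exact mem_long hvs PM.one' hσ _)
            rwa [hsum] at this
          exact MLmain h hv hs PM.one' hσ hw
    · rw [show (r : ℤ) = 2 * m + 1 from hm] at hxΔ hxΨ
      by_cases hs : s ∈ I
      · have hz : ((1 : ℝ) • eps t0, ((2 * 0 + 1 : ℤ) : ℝ)) ∈ Δ :=
          h.psi (psi_short_out ht0 PM.one' 0)
        have hst0 : s ≠ t0 := fun hh => ht0 (hh ▸ hs)
        have hsum : (σ • eps s, ((2 * m + 1 : ℤ) : ℝ)) + ((1 : ℝ) • eps t0, ((2 * 0 + 1 : ℤ) : ℝ))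
            = (σ • eps s + (1 : ℝ) • eps t0, ((2 * (m + 1) : ℤ) : ℝ)) :=
          pair_add_eq rfl (by push_cast; ring)
        have hw : (σ • eps s + (1 : ℝ) • eps t0, ((2 * (m + 1) : ℤ) : ℝ)) ∈ Δ := by
          have := h.addc _ hxΔ _ hz (by rw [hsum]; exact mem_long hst0 hσ PM.one' _)
          rwa [hsum] at this
        exact MLmain h hs ht0 hσ PM.one' hw
      · exact absurd (psi_short_out hs hσ m) hxΨ
  · subst hxeq
    by_cases hs : s ∈ I <;> by_cases ht : t ∈ I
    · exact absurd (psi_long hst (Or.inl ⟨hs, ht⟩) hσ hτ r) hxΨ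
    · exact MLmain h hs ht hσ hτ hxΔ
    · have hcomm : ((σ • eps s + τ • eps t, ((2 * r : ℤ) : ℝ)) : Euc n × ℝ)
          = (τ • eps t + σ • eps s, ((2 * r : ℤ) : ℝ)) := by rw [add_comm]
      rw [hcomm] at hxΔ
      exact MLmain h ht hs hτ hσ hxΔ
    · exact absurd (psi_long hst (Or.inr ⟨hs, ht⟩) hσ hτ r) hxΨ

end Stmt12Max

/-- For every proper subset `I ⊊ {1,…,n}` the set `Ψ_I` is a
maximal closed subroot system of the affine root system of type `D_{n+1}^{(2)}`. -/
theorem statement12 (n : ℕ) (hn : 2 ≤ n) (I : Set (Fin n)) (hI : I ≠ Set.univ) :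
    IsMaximalClosedSubrootSystem (PhiD2 n) (PsiID2 n I) := by
  obtain ⟨t0, ht0⟩ : ∃ t0, t0 ∉ I := by
    by_contra hco
    push_neg at hco
    exact hI (Set.eq_univ_of_forall hco)
  have hPsiSubPhi : PsiID2 n I ⊆ PhiD2 n := fun x hx => ((psi_char I x).mp hx).1
  have hNe : PsiID2 n I ≠ PhiD2 n := by
    intro heq
    have hmem : ((1 : ℝ) • eps t0, ((0 : ℤ) : ℝ)) ∈ PsiID2 n I := by
      rw [heq]; exact mem_short PM.one' 0
    obtain ⟨-, m, hm⟩ := (psi_char I _).mp hmem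
    rw [Ff_short, if_neg ht0] at hm
    have h2 : (-1 : ℤ) = 2 * m := by
      have h3 : (-1 : ℝ) = 2 * (m : ℝ) := by
        push_cast at hm
        linarith
      exact_mod_cast h3
    omega
  have hrefl : ∀ x ∈ PsiID2 n I, ∀ y ∈ PsiID2 n I, reflA x y ∈ PsiID2 n I := by
    intro x hx y hy
    obtain ⟨hxΦ, ax, hax⟩ := (psi_char I x).mp hx
    obtain ⟨hyΦ, ay, hay⟩ := (psi_char I y).mp hy
    obtain ⟨hrΦ, k, hk⟩ := phi_refl hxΦ hyΦ
    refine (psi_char I _).mpr ⟨hrΦ, ay - k * ax, ?_⟩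
    rw [reflA_eq_sub, Ff_sub_smul, hax, hay, show rk x y = (k : ℝ) from hk]
    push_cast
    ring
  have hclosed : IsClosedIn (PhiD2 n) (PsiID2 n I) := by
    intro x hx y hy hΦ
    obtain ⟨hxΦ, ax, hax⟩ := (psi_char I x).mp hx
    obtain ⟨hyΦ, ay, hay⟩ := (psi_char I y).mp hy
    refine (psi_char I _).mpr ⟨hΦ, ax + ay, ?_⟩
    rw [Ff_add, hax, hay]
    push_cast
    ring
  have hne : (PsiID2 n I).Nonempty := by
    by_cases h0 : (⟨0, by omega⟩ : Fin n) ∈ I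
    · exact ⟨_, psi_short_in h0 PM.one' 0⟩
    · exact ⟨_, psi_short_out h0 PM.one' 0⟩
  refine ⟨⟨⟨hne, hPsiSubPhi, hNe, hrefl⟩, hclosed⟩, ?_⟩
  intro Δ hΔ hΨΔ
  obtain ⟨⟨hne2, hsub2, hneq2, hrefl2⟩, hclosed2⟩ := hΔ
  by_cases hd : Δ ⊆ PsiID2 n I
  · exact Set.Subset.antisymm hd hΨΔ
  · obtain ⟨x, hxΔ, hxΨ⟩ := Set.not_subset.mp hd
    have hgood : GoodSet n I Δ := ⟨hsub2, hrefl2, hclosed2, hΨΔ⟩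
    exact absurd (Set.Subset.antisymm hsub2 (max_key hn hI hgood hxΔ hxΨ)) hneq2
end
end
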